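/- There exists a constant c > 0 such that for every integer n ≥ 2 and every univariate real polynomial p of degree at most n, the supremum of |p| over the interval [-1,1] is at most c·(log n) times the maximum of |p| over the set C_n = {cos(kπ/n) : k = 0, 1, ..., n} of n+1 Chebyshev–Lobatto points. (In the terminology of weakly admissible meshes: the Chebyshev–Lobatto points form a one-dimensional WAM for [-1,1] with constant C(A_n) = O(log n).) -/

import Mathlib

open Finset Real


lemma sum_exp_eq (n : ℕ) (hn : 0 < n) (m : ℤ) :
    ∑ k ∈ Finset.range (2*n), Complex.exp ((m : ℂ) * k * Real.pi * Complex.I / n) =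
      if (2*(n:ℤ)) ∣ m then (2*(n:ℕ) : ℂ) else 0 := by
  have hn' : (n:ℂ) ≠ 0 := by exact_mod_cast Nat.cast_ne_zero.2 hn.ne'
  have hpi : (Real.pi : ℂ) ≠ 0 := by exact_mod_cast Real.pi_ne_zero
  set z : ℂ := Complex.exp ((m : ℂ) * Real.pi * Complex.I / n) with hz
  have hzk : ∀ k : ℕ, Complex.exp ((m : ℂ) * k * Real.pi * Complex.I / n) = z ^ k := by
    intro k
    rw [hz, ← Complex.exp_nat_mul]
    ring_nf
  simp only [hzk]
  by_cases hdvd : (2*(n:ℤ)) ∣ m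
  · obtain ⟨c, hc⟩ := hdvd
    have hz1 : z = 1 := by
      rw [hz, Complex.exp_eq_one_iff]
      refine ⟨c, ?_⟩
      rw [hc]
      push_cast
      field_simp
    rw [if_pos ⟨c, hc⟩]
    simp [hz1]
  · have hz1 : z ≠ 1 := by
      rw [hz, Ne, Complex.exp_eq_one_iff]
      rintro ⟨c, hc⟩
      apply hdvd
      refine ⟨c, ?_⟩
      field_simp at hc
      have h2 : (m : ℂ) * (Real.pi * Complex.I) = (2 * n * c) * (Real.pi * Complex.I) := by
        linear_combination (Real.pi * Complex.I) * hc
      have h3 : (m : ℂ) = 2 * n * c :=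
        mul_right_cancel₀ (mul_ne_zero hpi Complex.I_ne_zero) h2
      exact_mod_cast h3
    rw [geom_sum_eq hz1]
    have hzn : z ^ (2*n) = 1 := by
      rw [hz, ← Complex.exp_nat_mul, Complex.exp_eq_one_iff]
      refine ⟨m, ?_⟩
      push_cast
      field_simp
    rw [hzn]
    simp [if_neg hdvd]

lemma sum_cos_m (n : ℕ) (hn : 0 < n) (m : ℤ) :
    ∑ k ∈ Finset.range (2*n), Real.cos ((m:ℝ) * k * Real.pi / n) =
      if (2*(n:ℤ)) ∣ m then (2*(n:ℕ) : ℝ) else 0 := by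
  have h := congrArg Complex.re (sum_exp_eq n hn m)
  rw [Complex.re_sum] at h
  have h2 : ∀ k ∈ Finset.range (2*n),
      (Complex.exp ((m : ℂ) * k * Real.pi * Complex.I / n)).re = Real.cos ((m:ℝ) * k * Real.pi / n) := by
    intro k _
    rw [show (m : ℂ) * k * Real.pi * Complex.I / n = ((( (m:ℝ) * k * Real.pi / n : ℝ)) : ℂ) * Complex.I by push_cast; ring]
    rw [Complex.exp_ofReal_mul_I_re]
  rw [Finset.sum_congr rfl h2] at h
  rw [h]
  split <;> simp

lemma sum_sin_m (n : ℕ) (hn : 0 < n) (m : ℤ) :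
    ∑ k ∈ Finset.range (2*n), Real.sin ((m:ℝ) * k * Real.pi / n) = 0 := by
  have h := congrArg Complex.im (sum_exp_eq n hn m)
  rw [Complex.im_sum] at h
  have h2 : ∀ k ∈ Finset.range (2*n),
      (Complex.exp ((m : ℂ) * k * Real.pi * Complex.I / n)).im = Real.sin ((m:ℝ) * k * Real.pi / n) := by
    intro k _
    rw [show (m : ℂ) * k * Real.pi * Complex.I / n = ((( (m:ℝ) * k * Real.pi / n : ℝ)) : ℂ) * Complex.I by push_cast; ring]
    rw [Complex.exp_ofReal_mul_I_im]
  rw [Finset.sum_congr rfl h2] at h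
  rw [h]
  split <;> simp

lemma sum_cos_cos (n : ℕ) (hn : 0 < n) (i j : ℤ) :
    ∑ k ∈ Finset.range (2*n), Real.cos ((i:ℝ) * k * Real.pi / n) * Real.cos ((j:ℝ) * k * Real.pi / n) =
      ((if (2*(n:ℤ)) ∣ (i+j) then (2*(n:ℕ) : ℝ) else 0) + (if (2*(n:ℤ)) ∣ (i-j) then (2*(n:ℕ) : ℝ) else 0)) / 2 := by
  have key : ∀ k ∈ Finset.range (2*n),
      Real.cos ((i:ℝ) * k * Real.pi / n) * Real.cos ((j:ℝ) * k * Real.pi / n) =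
        (Real.cos (((i+j : ℤ):ℝ) * k * Real.pi / n) + Real.cos (((i-j : ℤ):ℝ) * k * Real.pi / n)) / 2 := by
    intro k _
    have h1 := Real.cos_add ((i:ℝ) * k * Real.pi / n) ((j:ℝ) * k * Real.pi / n)
    have h2 := Real.cos_sub ((i:ℝ) * k * Real.pi / n) ((j:ℝ) * k * Real.pi / n)
    have e1 : ((i+j : ℤ):ℝ) * k * Real.pi / n = (i:ℝ) * k * Real.pi / n + (j:ℝ) * k * Real.pi / n := by
      push_cast; ring
    have e2 : ((i-j : ℤ):ℝ) * k * Real.pi / n = (i:ℝ) * k * Real.pi / n - (j:ℝ) * k * Real.pi / n := by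
      push_cast; ring
    rw [e1, e2, h1, h2]; ring
  rw [Finset.sum_congr rfl key, ← Finset.sum_div, Finset.sum_add_distrib,
    sum_cos_m n hn (i+j), sum_cos_m n hn (i-j)]

lemma sum_sin_cos (n : ℕ) (hn : 0 < n) (i j : ℤ) :
    ∑ k ∈ Finset.range (2*n), Real.sin ((i:ℝ) * k * Real.pi / n) * Real.cos ((j:ℝ) * k * Real.pi / n) = 0 := by
  have key : ∀ k ∈ Finset.range (2*n),
      Real.sin ((i:ℝ) * k * Real.pi / n) * Real.cos ((j:ℝ) * k * Real.pi / n) =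
        (Real.sin (((i+j : ℤ):ℝ) * k * Real.pi / n) + Real.sin (((i-j : ℤ):ℝ) * k * Real.pi / n)) / 2 := by
    intro k _
    have h1 := Real.sin_add ((i:ℝ) * k * Real.pi / n) ((j:ℝ) * k * Real.pi / n)
    have h2 := Real.sin_sub ((i:ℝ) * k * Real.pi / n) ((j:ℝ) * k * Real.pi / n)
    have e1 : ((i+j : ℤ):ℝ) * k * Real.pi / n = (i:ℝ) * k * Real.pi / n + (j:ℝ) * k * Real.pi / n := by
      push_cast; ring
    have e2 : ((i-j : ℤ):ℝ) * k * Real.pi / n = (i:ℝ) * k * Real.pi / n - (j:ℝ) * k * Real.pi / n := by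
      push_cast; ring
    rw [e1, e2, h1, h2]; ring
  rw [Finset.sum_congr rfl key, ← Finset.sum_div, Finset.sum_add_distrib,
    sum_sin_m n hn (i+j), sum_sin_m n hn (i-j)]
  norm_num

noncomputable def Gker (n : ℕ) (φ : ℝ) : ℝ :=
  (∑ i ∈ Finset.range (n+1), Real.cos (i*φ)) - 1/2 - Real.cos (n*φ)/2

lemma dirichlet (N : ℕ) (φ : ℝ) :
    2 * Real.sin (φ/2) * ∑ i ∈ Finset.range N, Real.cos (i*φ) =
      Real.sin (((N:ℝ) - 1/2)*φ) + Real.sin (φ/2) := by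
  induction N with
  | zero =>
    simp only [Finset.sum_range_zero, mul_zero, Nat.cast_zero]
    rw [show ((0:ℝ) - 1/2)*φ = -(φ/2) by ring, Real.sin_neg]
    ring
  | succ N ih =>
    rw [Finset.sum_range_succ, mul_add, ih]
    push_cast
    rw [show ((N:ℝ) + 1 - 1/2)*φ = (N:ℝ)*φ + φ/2 by ring,
      show ((N:ℝ) - 1/2)*φ = (N:ℝ)*φ - φ/2 by ring, Real.sin_add, Real.sin_sub]
    ring

lemma Gker_mul_sin (n : ℕ) (φ : ℝ) :
    2 * Real.sin (φ/2) * Gker n φ = Real.sin ((n:ℝ)*φ) * Real.cos (φ/2) := by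
  unfold Gker
  rw [mul_sub, mul_sub, dirichlet (n+1) φ]
  push_cast
  rw [show ((n:ℝ) + 1 - 1/2)*φ = (n:ℝ)*φ + φ/2 by ring, Real.sin_add]
  ring

lemma abs_Gker_le_trivial (n : ℕ) (φ : ℝ) : |Gker n φ| ≤ (n:ℝ) + 2 := by
  unfold Gker
  have h1 : |∑ i ∈ Finset.range (n+1), Real.cos (i*φ)| ≤ (n:ℝ)+1 := by
    calc |∑ i ∈ Finset.range (n+1), Real.cos (i*φ)| ≤ ∑ i ∈ Finset.range (n+1), |Real.cos (i*φ)| :=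
          Finset.abs_sum_le_sum_abs _ _
      _ ≤ ∑ i ∈ Finset.range (n+1), 1 := Finset.sum_le_sum (fun i _ => Real.abs_cos_le_one _)
      _ = (n:ℝ)+1 := by simp
  have h2 : |Real.cos ((n:ℝ)*φ)| ≤ 1 := Real.abs_cos_le_one _
  have e1 := abs_le.mp h1
  have e2 := abs_le.mp h2
  rw [abs_le]
  constructor <;> linarith

lemma abs_Gker_le_far (n : ℕ) (hn : 0 < n) (φ a : ℝ) (ha : 0 < a)
    (h1 : a ≤ |φ|) (h2 : |φ| ≤ 2*Real.pi - a) : |Gker n φ| ≤ Real.pi/(2*a) := by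
  have hpi := Real.pi_pos
  -- |sin (φ/2)| ≥ a/π
  have key : a/Real.pi ≤ |Real.sin (φ/2)| := by
    set ψ : ℝ := |φ|/2 with hψ
    have hψ1 : a/2 ≤ ψ := by simp [hψ]; linarith
    have hψ2 : ψ ≤ Real.pi - a/2 := by simp [hψ]; linarith
    have habs : |Real.sin (φ/2)| = Real.sin ψ := by
      rcases abs_cases φ with ⟨he, _⟩ | ⟨he, hneg⟩
      · rw [hψ, he]
        exact abs_of_nonneg (Real.sin_nonneg_of_nonneg_of_le_pi (by linarith [abs_nonneg φ, he]) (by linarith))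
      · rw [hψ, he]
        rw [show φ/2 = -(-φ/2) by ring, Real.sin_neg, abs_neg]
        exact abs_of_nonneg (Real.sin_nonneg_of_nonneg_of_le_pi (by linarith) (by linarith))
    rw [habs]
    rcases le_or_gt ψ (Real.pi/2) with hc | hc
    · have := Real.mul_le_sin (x := ψ) (by linarith) hc
      calc a/Real.pi = 2/Real.pi * (a/2) := by ring
        _ ≤ 2/Real.pi * ψ := mul_le_mul_of_nonneg_left hψ1 (by positivity)
        _ ≤ Real.sin ψ := this
    · rw [← Real.sin_pi_sub]
      have := Real.mul_le_sin (x := Real.pi - ψ) (by linarith) (by linarith)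
      calc a/Real.pi = 2/Real.pi * (a/2) := by ring
        _ ≤ 2/Real.pi * (Real.pi - ψ) := mul_le_mul_of_nonneg_left (by linarith) (by positivity)
        _ ≤ Real.sin (Real.pi - ψ) := this
  have hs : Real.sin (φ/2) ≠ 0 := by
    intro h
    rw [h, abs_zero] at key
    have : 0 < a/Real.pi := by positivity
    linarith
  have heq : Gker n φ = Real.sin ((n:ℝ)*φ) * Real.cos (φ/2) / (2 * Real.sin (φ/2)) := by
    field_simp
    linarith [Gker_mul_sin n φ]
  rw [heq, abs_div]
  rw [div_le_div_iff₀ (by positivity) (by positivity)]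
  have hb1 : |Real.sin ((n:ℝ)*φ) * Real.cos (φ/2)| ≤ 1 := by
    rw [abs_mul]
    exact mul_le_one₀ (Real.abs_sin_le_one _) (abs_nonneg _) (Real.abs_cos_le_one _)
  have hb2 : |2 * Real.sin (φ/2)| = 2 * |Real.sin (φ/2)| := by
    rw [abs_mul]; norm_num
  rw [hb2]
  calc |Real.sin ((n:ℝ)*φ) * Real.cos (φ/2)| * (2*a) ≤ 1 * (2*a) := by gcongr
    _ = 2*a := by ring
    _ ≤ Real.pi * (2 * |Real.sin (φ/2)|) := by
        have := (div_le_iff₀ hpi).mp key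
        nlinarith [abs_nonneg (Real.sin (φ/2))]

lemma int_dvd_bounded {N m : ℤ} (hN : 0 < N) (hm : -N < m) (hm2 : m < N) (h : N ∣ m) : m = 0 := by
  rcases h with ⟨c, rfl⟩
  rcases lt_trichotomy c 0 with hc|hc|hc
  · nlinarith
  · simp [hc]
  · nlinarith

lemma int_dvd_bounded2 {N m : ℤ} (hN : 0 < N) (h0 : 0 ≤ m) (h2 : m ≤ N) (h : N ∣ m) : m = 0 ∨ m = N := by
  rcases h with ⟨c, rfl⟩
  rcases lt_trichotomy c 0 with hc|hc|hc
  · nlinarith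
  · left; simp [hc]
  · have : c = 1 := by nlinarith
    right; rw [this, mul_one]

lemma kernel_repro (n : ℕ) (hn : 0 < n) (j : ℕ) (hj : j ≤ n) (θ : ℝ) :
    ∑ k ∈ Finset.range (2*n), Real.cos ((j:ℝ) * k * Real.pi / n) * Gker n (θ - (k:ℝ)*Real.pi/(n:ℝ))
      = n * Real.cos ((j:ℝ)*θ) := by
  have hCC : ∀ i : ℕ, i ≤ n →
      (∑ k ∈ Finset.range (2*n), Real.cos ((i:ℝ)*k*Real.pi/n) * Real.cos ((j:ℝ)*k*Real.pi/n)) =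
        (if i = j then (n:ℝ) else 0) +
          ((if i = 0 ∧ j = 0 then (n:ℝ) else 0) + (if i = n ∧ j = n then (n:ℝ) else 0)) := by
    intro i hi
    have base := sum_cos_cos n hn (i:ℤ) (j:ℤ)
    push_cast at base
    rw [base]
    have c1 : ((2*(n:ℤ)) ∣ ((i:ℤ)+(j:ℤ))) ↔ ((i=0∧j=0) ∨ (i=n∧j=n)) := by
      constructor
      · intro h
        have := int_dvd_bounded2 (N := 2*(n:ℤ)) (by positivity) (by positivity)
          (by push_cast; omega) h
        omega
      · rintro (⟨h1,h2⟩|⟨h1,h2⟩) <;> subst h1 <;> subst h2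
        · simp
        · exact ⟨1, by push_cast; ring⟩
    have c2 : ((2*(n:ℤ)) ∣ ((i:ℤ)-(j:ℤ))) ↔ i = j := by
      constructor
      · intro h
        have := int_dvd_bounded (N := 2*(n:ℤ)) (by positivity) (by omega) (by omega) h
        omega
      · rintro rfl; simp
    rw [if_congr c1 rfl rfl, if_congr c2 rfl rfl]
    by_cases hA : i = 0 ∧ j = 0
    · obtain ⟨h1, h2⟩ := hA
      subst h1; subst h2
      simp [hn.ne, hn.ne']
      ring
    · by_cases hB : i = n ∧ j = n
      · obtain ⟨h1, h2⟩ := hB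
        subst h1; subst h2
        simp [hn.ne, hn.ne']
        push_cast; ring
      · have hor : ¬((i=0∧j=0)∨(i=n∧j=n)) := by tauto
        by_cases hij : i = j
        · have hj0 : j ≠ 0 := fun h => hA ⟨by omega, h⟩
          have hjn : j ≠ n := fun h => hB ⟨by omega, h⟩
          simp [hij, hj0, hjn]
        · simp [hor, hij, hA, hB]
  have hSC : ∀ i : ℕ,
      (∑ k ∈ Finset.range (2*n), Real.sin ((i:ℝ)*k*Real.pi/n) * Real.cos ((j:ℝ)*k*Real.pi/n)) = 0 := by
    intro i
    have base := sum_sin_cos n hn (i:ℤ) (j:ℤ)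
    push_cast at base
    exact base
  have hCj : (∑ k ∈ Finset.range (2*n), Real.cos ((j:ℝ)*k*Real.pi/n)) = if j = 0 then (2*(n:ℕ):ℝ) else 0 := by
    have base := sum_cos_m n hn (j:ℤ)
    push_cast at base
    rw [base]
    have hiff : ((2*(n:ℤ)) ∣ (j:ℤ)) ↔ j = 0 := by
      constructor
      · intro h
        have := int_dvd_bounded (N := 2*(n:ℤ)) (by positivity) (by omega) (by omega) h
        omega
      · rintro rfl; simp
    rw [if_congr hiff rfl rfl]
  have point : ∀ k ∈ Finset.range (2*n),
      Real.cos ((j:ℝ)*k*Real.pi/n) * Gker n (θ - (k:ℝ)*Real.pi/(n:ℝ)) =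
        (∑ i ∈ Finset.range (n+1),
          (Real.cos ((i:ℝ)*θ) * (Real.cos ((i:ℝ)*k*Real.pi/n) * Real.cos ((j:ℝ)*k*Real.pi/n))
            + Real.sin ((i:ℝ)*θ) * (Real.sin ((i:ℝ)*k*Real.pi/n) * Real.cos ((j:ℝ)*k*Real.pi/n))))
        - (1/2) * Real.cos ((j:ℝ)*k*Real.pi/n)
        - (1/2) * (Real.cos ((n:ℝ)*θ) * (Real.cos ((n:ℝ)*k*Real.pi/n) * Real.cos ((j:ℝ)*k*Real.pi/n))
            + Real.sin ((n:ℝ)*θ) * (Real.sin ((n:ℝ)*k*Real.pi/n) * Real.cos ((j:ℝ)*k*Real.pi/n))) := by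
    intro k _
    have hterm : ∀ i : ℕ, Real.cos ((i:ℝ)*(θ - (k:ℝ)*Real.pi/(n:ℝ)))
        = Real.cos ((i:ℝ)*θ)*Real.cos ((i:ℝ)*k*Real.pi/n)
          + Real.sin ((i:ℝ)*θ)*Real.sin ((i:ℝ)*k*Real.pi/n) := by
      intro i
      rw [show (i:ℝ)*(θ - (k:ℝ)*Real.pi/(n:ℝ)) = (i:ℝ)*θ - (i:ℝ)*k*Real.pi/n by ring, Real.cos_sub]
    simp only [Gker, hterm]
    rw [mul_sub, mul_sub, Finset.mul_sum]
    congr 1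
    · congr 1
      · exact Finset.sum_congr rfl (fun i _ => by ring)
      · ring
    · ring
  rw [Finset.sum_congr rfl point, Finset.sum_sub_distrib, Finset.sum_sub_distrib, Finset.sum_comm]
  have inner : ∀ i ∈ Finset.range (n+1),
      (∑ k ∈ Finset.range (2*n),
        (Real.cos ((i:ℝ)*θ) * (Real.cos ((i:ℝ)*k*Real.pi/n) * Real.cos ((j:ℝ)*k*Real.pi/n))
          + Real.sin ((i:ℝ)*θ) * (Real.sin ((i:ℝ)*k*Real.pi/n) * Real.cos ((j:ℝ)*k*Real.pi/n))))
      = Real.cos ((i:ℝ)*θ) * ((if i = j then (n:ℝ) else 0) +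
          ((if i = 0 ∧ j = 0 then (n:ℝ) else 0) + (if i = n ∧ j = n then (n:ℝ) else 0))) := by
    intro i hi
    rw [Finset.sum_add_distrib, ← Finset.mul_sum, ← Finset.mul_sum,
      hCC i (by simpa [Nat.lt_succ_iff] using hi), hSC i]
    ring
  rw [Finset.sum_congr rfl inner]
  have e2 : ∑ x ∈ Finset.range (2*n), 1/2 * Real.cos ((j:ℝ)*x*Real.pi/n)
      = 1/2 * (if j = 0 then (2*(n:ℕ):ℝ) else 0) := by
    rw [← Finset.mul_sum, hCj]
  have e3 : ∑ x ∈ Finset.range (2*n),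
      1/2 * (Real.cos ((n:ℝ)*θ) * (Real.cos ((n:ℝ)*x*Real.pi/n) * Real.cos ((j:ℝ)*x*Real.pi/n))
        + Real.sin ((n:ℝ)*θ) * (Real.sin ((n:ℝ)*x*Real.pi/n) * Real.cos ((j:ℝ)*x*Real.pi/n)))
      = 1/2 * (Real.cos ((n:ℝ)*θ) * ((if n = j then (n:ℝ) else 0) +
          ((if n = 0 ∧ j = 0 then (n:ℝ) else 0) + (if n = n ∧ j = n then (n:ℝ) else 0)))) := by
    rw [← Finset.mul_sum, inner n (Finset.self_mem_range_succ n)]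
  rw [e2, e3]
  have e1 : ∑ x ∈ Finset.range (n+1), Real.cos ((x:ℝ)*θ) * ((if x = j then (n:ℝ) else 0) +
        ((if x = 0 ∧ j = 0 then (n:ℝ) else 0) + (if x = n ∧ j = n then (n:ℝ) else 0)))
      = Real.cos ((j:ℝ)*θ) * n + ((if j = 0 then (n:ℝ) else 0)
          + (if j = n then Real.cos ((n:ℝ)*θ) * n else 0)) := by
    have split : ∀ x ∈ Finset.range (n+1), Real.cos ((x:ℝ)*θ) * ((if x = j then (n:ℝ) else 0) +
          ((if x = 0 ∧ j = 0 then (n:ℝ) else 0) + (if x = n ∧ j = n then (n:ℝ) else 0)))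
        = (if x = j then Real.cos ((x:ℝ)*θ) * n else 0) +
            ((if x = 0 ∧ j = 0 then Real.cos ((x:ℝ)*θ) * n else 0)
              + (if x = n ∧ j = n then Real.cos ((x:ℝ)*θ) * n else 0)) := by
      intro x _
      split_ifs <;> ring
    rw [Finset.sum_congr rfl split, Finset.sum_add_distrib, Finset.sum_add_distrib]
    congr 1
    · rw [Finset.sum_ite_eq' (Finset.range (n+1)) j (fun x => Real.cos ((x:ℝ)*θ) * n),
        if_pos (Finset.mem_range.mpr (by omega))]
    congr 1
    · by_cases hj0 : j = 0
      · subst hj0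
        simp [Finset.sum_ite_eq']
      · simp [hj0]
    · by_cases hjn : j = n
      · subst hjn
        simp [Finset.sum_ite_eq']
      · simp [hjn]
  rw [e1]
  by_cases hj0 : j = 0
  · subst hj0
    by_cases hjn : (0:ℕ) = n
    · exact absurd hjn.symm (by omega)
    · simp [hjn, Ne.symm hjn, hn.ne']
      try push_cast
      try ring
  · by_cases hjn : j = n
    · subst hjn
      simp [hj0, hn.ne']
      try push_cast
      try ring
    · simp [hj0, hjn, Ne.symm hjn, hn.ne']
      try push_cast
      try ring

lemma cos_pow_expand (d : ℕ) (α : ℝ) :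
    Real.cos α ^ d = ∑ r ∈ Finset.range (d+1),
      ((d.choose r : ℝ) / 2^d) * Real.cos ((2*(r:ℝ) - (d:ℝ)) * α) := by
  have key : ((Real.cos α ^ d : ℝ) : ℂ) =
      ∑ r ∈ Finset.range (d+1), ((((d.choose r : ℝ) / 2^d : ℝ)) : ℂ) *
        Complex.exp ((((2*(r:ℝ) - (d:ℝ)) * α : ℝ) : ℂ) * Complex.I) := by
    rw [Complex.ofReal_pow, Complex.ofReal_cos, Complex.cos]
    rw [div_pow, Commute.add_pow (Commute.all _ _)]
    rw [Finset.sum_div]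
    apply Finset.sum_congr rfl
    intro r hr
    have hrd : r ≤ d := by
      rw [Finset.mem_range] at hr; omega
    have e1 : Complex.exp (↑α * Complex.I) ^ r = Complex.exp ((r:ℂ) * (↑α * Complex.I)) := by
      rw [Complex.exp_nat_mul]
    have e2 : Complex.exp (-↑α * Complex.I) ^ (d - r) = Complex.exp (((d-r:ℕ):ℂ) * (-↑α * Complex.I)) := by
      rw [Complex.exp_nat_mul]
    rw [e1, e2, ← Complex.exp_add]
    have e3 : (r:ℂ) * (↑α * Complex.I) + ((d-r:ℕ):ℂ) * (-↑α * Complex.I)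
        = (((2*(r:ℝ) - (d:ℝ)) * α : ℝ) : ℂ) * Complex.I := by
      have : ((d-r:ℕ):ℂ) = (d:ℂ) - (r:ℂ) := by
        push_cast [Nat.cast_sub hrd]; ring
      rw [this]
      push_cast
      ring
    rw [e3]
    push_cast
    ring
  have := congrArg Complex.re key
  rw [Complex.re_sum] at this
  rw [Complex.ofReal_re] at this
  rw [this]
  apply Finset.sum_congr rfl
  intro r _
  rw [Complex.re_ofReal_mul, Complex.exp_ofReal_mul_I_re]

lemma kernel_repro' (n : ℕ) (hn : 0 < n) (m : ℤ) (hm : m.natAbs ≤ n) (θ : ℝ) :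
    ∑ k ∈ Finset.range (2*n), Real.cos ((m:ℝ) * k * Real.pi / n) * Gker n (θ - (k:ℝ)*Real.pi/(n:ℝ))
      = n * Real.cos ((m:ℝ)*θ) := by
  set j := m.natAbs with hj
  rcases Int.natAbs_eq m with h | h
  · have e : ∀ k : ℕ, Real.cos ((m:ℝ) * k * Real.pi / n) = Real.cos ((j:ℝ) * k * Real.pi / n) := by
      intro k; rw [h, Int.cast_natCast]
    have e2 : Real.cos ((m:ℝ)*θ) = Real.cos ((j:ℝ)*θ) := by
      rw [h, Int.cast_natCast]
    simp only [e, e2]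
    exact kernel_repro n hn j hm θ
  · have e : ∀ k : ℕ, Real.cos ((m:ℝ) * k * Real.pi / n) = Real.cos ((j:ℝ) * k * Real.pi / n) := by
      intro k; rw [h, Int.cast_neg, Int.cast_natCast]
      rw [show (-(j:ℝ)) * k * Real.pi / n = -((j:ℝ) * k * Real.pi / n) by ring, Real.cos_neg]
    have e2 : Real.cos ((m:ℝ)*θ) = Real.cos ((j:ℝ)*θ) := by
      rw [h, Int.cast_neg, Int.cast_natCast]
      rw [show (-(j:ℝ)) * θ = -((j:ℝ) * θ) by ring, Real.cos_neg]
    simp only [e, e2]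
    exact kernel_repro n hn j hm θ

lemma interp (n : ℕ) (hn : 0 < n) (p : Polynomial ℝ) (hp : p.natDegree ≤ n) (θ : ℝ) :
    (n:ℝ) * p.eval (Real.cos θ) =
      ∑ k ∈ Finset.range (2*n), p.eval (Real.cos ((k:ℝ)*Real.pi/n)) * Gker n (θ - (k:ℝ)*Real.pi/(n:ℝ)) := by
  have heval : ∀ y : ℝ, p.eval y = ∑ d ∈ Finset.range (n+1), p.coeff d * y^d :=
    fun y => Polynomial.eval_eq_sum_range' (Nat.lt_succ_of_le hp) y
  have step1 : ∀ k ∈ Finset.range (2*n),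
      p.eval (Real.cos ((k:ℝ)*Real.pi/n)) * Gker n (θ - (k:ℝ)*Real.pi/(n:ℝ))
      = ∑ d ∈ Finset.range (n+1), ∑ r ∈ Finset.range (d+1),
          (p.coeff d * ((d.choose r : ℝ)/2^d)) *
            (Real.cos (((2*(r:ℤ)-(d:ℤ) : ℤ):ℝ) * k * Real.pi / n) * Gker n (θ - (k:ℝ)*Real.pi/(n:ℝ))) := by
    intro k _
    rw [heval, Finset.sum_mul]
    apply Finset.sum_congr rfl
    intro d _
    rw [cos_pow_expand d ((k:ℝ)*Real.pi/n), Finset.mul_sum, Finset.sum_mul]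
    apply Finset.sum_congr rfl
    intro r _
    have earg : (((2*(r:ℤ)-(d:ℤ) : ℤ)):ℝ) * k * Real.pi / n = (2*(r:ℝ) - (d:ℝ)) * ((k:ℝ)*Real.pi/n) := by
      push_cast; ring
    rw [earg]; ring
  rw [Finset.sum_congr rfl step1, Finset.sum_comm]
  have step2 : ∀ d ∈ Finset.range (n+1),
      (∑ k ∈ Finset.range (2*n), ∑ r ∈ Finset.range (d+1),
        (p.coeff d * ((d.choose r : ℝ)/2^d)) *
          (Real.cos (((2*(r:ℤ)-(d:ℤ) : ℤ):ℝ) * k * Real.pi / n) * Gker n (θ - (k:ℝ)*Real.pi/(n:ℝ))))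
      = ∑ r ∈ Finset.range (d+1),
          (p.coeff d * ((d.choose r : ℝ)/2^d)) * ((n:ℝ) * Real.cos (((2*(r:ℤ)-(d:ℤ) : ℤ):ℝ)*θ)) := by
    intro d hd
    rw [Finset.sum_comm]
    apply Finset.sum_congr rfl
    intro r hr
    rw [← Finset.mul_sum]
    congr 1
    apply kernel_repro' n hn (2*(r:ℤ)-(d:ℤ))
    have hd' : d ≤ n := by rw [Finset.mem_range] at hd; omega
    have hr' : r ≤ d := by rw [Finset.mem_range] at hr; omega
    omega
  rw [Finset.sum_congr rfl step2, heval (Real.cos θ), Finset.mul_sum]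
  apply Finset.sum_congr rfl
  intro d _
  rw [cos_pow_expand d θ, Finset.mul_sum, Finset.mul_sum]
  apply Finset.sum_congr rfl
  intro r _
  have earg : (((2*(r:ℤ)-(d:ℤ) : ℤ)):ℝ) * θ = (2*(r:ℝ) - (d:ℝ)) * θ := by
    push_cast; ring
  rw [earg]; ring

lemma harmonic_le (N : ℕ) : ∑ j ∈ Finset.Icc 1 N, (1:ℝ)/j ≤ 1 + Real.log N := by
  induction N with
  | zero => simp
  | succ N ih =>
    rcases Nat.eq_zero_or_pos N with rfl | hN
    · norm_num
    · rw [Finset.sum_Icc_succ_top (by omega : 1 ≤ N+1)]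
      have hlog : Real.log N + 1/((N:ℝ)+1) ≤ Real.log ((N:ℕ)+1 : ℕ) := by
        have hN0 : (0:ℝ) < N := by exact_mod_cast hN
        have h1 : Real.log ((N:ℝ)/((N:ℝ)+1)) ≤ (N:ℝ)/((N:ℝ)+1) - 1 :=
          Real.log_le_sub_one_of_pos (by positivity)
        rw [Real.log_div (by positivity) (by positivity)] at h1
        have e : (N:ℝ)/((N:ℝ)+1) - 1 = -(1/((N:ℝ)+1)) := by field_simp; ring
        rw [e] at h1
        push_cast
        linarith
      push_cast at hlog ⊢
      linarith

lemma recip_sum_le (n : ℕ) (hn : 1 ≤ n) (s : Finset ℕ) (f : ℕ → ℕ)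
    (hinj : Set.InjOn f s) (hmem : ∀ k ∈ s, f k ∈ Finset.Icc 1 (2*n)) :
    ∑ k ∈ s, (1:ℝ)/(f k) ≤ 1 + Real.log (2*n) := by
  have h1 : ∑ j ∈ s.image f, (1:ℝ)/(j:ℝ) = ∑ k ∈ s, (1:ℝ)/((f k : ℕ):ℝ) :=
    Finset.sum_image (fun a ha b hb hab => hinj ha hb hab)
  rw [← h1]
  calc ∑ j ∈ s.image f, (1:ℝ)/j ≤ ∑ j ∈ Finset.Icc 1 (2*n), (1:ℝ)/j := by
        apply Finset.sum_le_sum_of_subset_of_nonneg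
        · intro j hj
          rcases Finset.mem_image.mp hj with ⟨k, hk, rfl⟩
          exact hmem k hk
        · intro j _ _; positivity
    _ ≤ 1 + Real.log (2*n) := by
        have := harmonic_le (2*n)
        push_cast at this ⊢
        linarith

lemma sum_abs_Gker_le (n : ℕ) (hn : 2 ≤ n) (θ : ℝ) (hθ0 : 0 ≤ θ) (hθ1 : θ ≤ Real.pi) :
    ∑ k ∈ Finset.range (2*n), |Gker n (θ - (k:ℝ)*Real.pi/(n:ℝ))|
      ≤ 2*((n:ℝ)+2) + 3 * ((n:ℝ)/2) * (1 + Real.log (2*n)) := by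
  have hpi := Real.pi_pos
  have hn0 : (0:ℝ) < n := by positivity
  set s : ℝ := θ * n / Real.pi with hs
  have hs0 : 0 ≤ s := by positivity
  have hsn : s ≤ n := by
    rw [hs, div_le_iff₀ hpi]
    nlinarith
  have hθeq : θ = s * Real.pi / n := by
    rw [hs]; field_simp
  set k₀ : ℕ := ⌊s⌋₊ with hk₀
  have hk₀s : (k₀:ℝ) ≤ s := Nat.floor_le hs0
  have hsk₀ : s < (k₀:ℝ) + 1 := Nat.lt_floor_add_one s
  have hk₀n : k₀ ≤ n := by
    have : (k₀:ℝ) ≤ (n:ℝ) := le_trans hk₀s hsn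
    exact_mod_cast this
  have hmono : ∀ A B : ℝ, A ≤ B → A*Real.pi/n ≤ B*Real.pi/n := fun A B h => by
    rw [mul_div_assoc, mul_div_assoc]
    exact mul_le_mul_of_nonneg_right h (by positivity)
  have h2pi : ∀ A : ℝ, A ≤ 2*n → A * Real.pi/n ≤ 2*Real.pi := fun A h => by
    have h2 := hmono A (2*(n:ℝ)) h
    rwa [show (2*(n:ℝ))*Real.pi/n = 2*Real.pi by field_simp] at h2
  have habs_pos : ∀ k:ℕ, (k:ℝ) ≤ s → |θ - (k:ℝ)*Real.pi/(n:ℝ)| = (s - k) * Real.pi / n := by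
    intro k hk
    rw [show θ - (k:ℝ)*Real.pi/(n:ℝ) = (s - k) * Real.pi / n by rw [hθeq]; ring]
    apply abs_of_nonneg
    have : (0:ℝ) ≤ s - k := by linarith
    positivity
  have habs_neg : ∀ k:ℕ, s ≤ (k:ℝ) → |θ - (k:ℝ)*Real.pi/(n:ℝ)| = ((k:ℝ) - s) * Real.pi / n := by
    intro k hk
    rw [show θ - (k:ℝ)*Real.pi/(n:ℝ) = -(((k:ℝ) - s) * Real.pi / n) by rw [hθeq]; ring, abs_neg]
    apply abs_of_nonneg
    have : (0:ℝ) ≤ (k:ℝ) - s := by linarith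
    positivity
  have far : ∀ (k j : ℕ), 0 < j → ((j:ℝ) * Real.pi / n ≤ |θ - (k:ℝ)*Real.pi/(n:ℝ)|) →
      (|θ - (k:ℝ)*Real.pi/(n:ℝ)| ≤ 2*Real.pi - (j:ℝ)*Real.pi/n) →
      |Gker n (θ - (k:ℝ)*Real.pi/(n:ℝ))| ≤ (n:ℝ)/2 * (1/(j:ℝ)) := by
    intro k j hj h1 h2
    have hj0 : (0:ℝ) < (j:ℝ) := by exact_mod_cast hj
    have hb := abs_Gker_le_far n (by omega) _ ((j:ℝ)*Real.pi/n) (by positivity) h1 h2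
    calc |Gker n (θ - (k:ℝ)*Real.pi/(n:ℝ))| ≤ Real.pi/(2*((j:ℝ)*Real.pi/n)) := hb
      _ = (n:ℝ)/2 * (1/(j:ℝ)) := by field_simp
  set B1 : ℕ → ℝ := fun k => if k < k₀ then (n:ℝ)/2 * (1/((k₀ - k:ℕ):ℝ)) else 0 with hB1
  set B2 : ℕ → ℝ := fun k => if k₀ ≤ k ∧ k ≤ k₀ + 1 then (n:ℝ)+2 else 0 with hB2
  set B3 : ℕ → ℝ := fun k => if k₀+2 ≤ k ∧ k ≤ k₀ + n then (n:ℝ)/2 * (1/((k - k₀ - 1:ℕ):ℝ)) else 0 with hB3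
  set B4 : ℕ → ℝ := fun k => if k₀+n+1 ≤ k then (n:ℝ)/2 * (1/((2*n + k₀ - k:ℕ):ℝ)) else 0 with hB4
  have key : ∀ k ∈ Finset.range (2*n),
      |Gker n (θ - (k:ℝ)*Real.pi/(n:ℝ))| ≤ B1 k + B2 k + B3 k + B4 k := by
    intro k hk
    rw [Finset.mem_range] at hk
    rcases lt_or_ge k k₀ with hc1 | hc1
    · -- k < k₀
      have hck : (k:ℝ) + 1 ≤ (k₀:ℝ) := by exact_mod_cast hc1
      have hjr : ((k₀ - k:ℕ):ℝ) = (k₀:ℝ) - k := by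
        rw [Nat.cast_sub hc1.le]
      have hb : |Gker n (θ - (k:ℝ)*Real.pi/(n:ℝ))| ≤ (n:ℝ)/2 * (1/((k₀ - k:ℕ):ℝ)) := by
        apply far k (k₀ - k) (by omega)
        · rw [habs_pos k (by linarith), hjr]
          exact hmono _ _ (by linarith)
        · rw [habs_pos k (by linarith), hjr]
          have h3 : (s - k) * Real.pi/n + ((k₀:ℝ) - k) * Real.pi/n ≤ 2*Real.pi := by
            have e : (s - k) * Real.pi/n + ((k₀:ℝ) - k) * Real.pi/n = ((s-k) + ((k₀:ℝ)-k)) * Real.pi/n := by ring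
            rw [e]
            apply h2pi
            have hkn : (k₀:ℝ) ≤ n := by exact_mod_cast hk₀n
            linarith
          linarith
      have e1 : B1 k = (n:ℝ)/2 * (1/((k₀ - k:ℕ):ℝ)) := by simp only [hB1]; rw [if_pos hc1]
      have e2 : B2 k = 0 := by simp only [hB2]; rw [if_neg (by omega)]
      have e3 : B3 k = 0 := by simp only [hB3]; rw [if_neg (by omega)]
      have e4 : B4 k = 0 := by simp only [hB4]; rw [if_neg (by omega)]
      rw [e1, e2, e3, e4]; linarith
    · rcases le_or_gt k (k₀+1) with hc2 | hc2
      · -- trivial zone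
        have hb := abs_Gker_le_trivial n (θ - (k:ℝ)*Real.pi/(n:ℝ))
        have e1 : B1 k = 0 := by simp only [hB1]; rw [if_neg (by omega)]
        have e2 : B2 k = (n:ℝ)+2 := by simp only [hB2]; rw [if_pos ⟨hc1, hc2⟩]
        have e3 : B3 k = 0 := by simp only [hB3]; rw [if_neg (by omega)]
        have e4 : B4 k = 0 := by simp only [hB4]; rw [if_neg (by omega)]
        rw [e1, e2, e3, e4]; linarith
      · rcases le_or_gt k (k₀+n) with hc3 | hc3
        · -- middle right zone
          have hck : (k₀:ℝ) + 2 ≤ (k:ℝ) := by exact_mod_cast hc2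
          have hckn : (k:ℝ) ≤ (k₀:ℝ) + n := by exact_mod_cast hc3
          have hjr : ((k - k₀ - 1:ℕ):ℝ) = (k:ℝ) - k₀ - 1 := by
            rw [Nat.sub_sub, Nat.cast_sub (by omega)]
            push_cast; ring
          have hb : |Gker n (θ - (k:ℝ)*Real.pi/(n:ℝ))| ≤ (n:ℝ)/2 * (1/((k - k₀ - 1:ℕ):ℝ)) := by
            apply far k (k - k₀ - 1) (by omega)
            · rw [habs_neg k (by linarith), hjr]
              exact hmono _ _ (by linarith)
            · rw [habs_neg k (by linarith), hjr]
              have h3 : ((k:ℝ) - s) * Real.pi/n + ((k:ℝ) - k₀ - 1) * Real.pi/n ≤ 2*Real.pi := by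
                rw [show ((k:ℝ) - s) * Real.pi/n + ((k:ℝ) - k₀ - 1) * Real.pi/n
                    = (((k:ℝ)-s) + ((k:ℝ)-k₀-1)) * Real.pi/n by ring]
                apply h2pi
                linarith
              linarith
          have e1 : B1 k = 0 := by simp only [hB1]; rw [if_neg (by omega)]
          have e2 : B2 k = 0 := by simp only [hB2]; rw [if_neg (by omega)]
          have e3 : B3 k = (n:ℝ)/2 * (1/((k - k₀ - 1:ℕ):ℝ)) := by
            simp only [hB3]; rw [if_pos ⟨hc2, hc3⟩]
          have e4 : B4 k = 0 := by simp only [hB4]; rw [if_neg (by omega)]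
          rw [e1, e2, e3, e4]; linarith
        · -- wrap-around zone
          have hck : (k₀:ℝ) + n + 1 ≤ (k:ℝ) := by exact_mod_cast hc3
          have hk2n : (k:ℝ) ≤ 2*(n:ℝ) - 1 := by
            have : (k:ℝ) + 1 ≤ 2*(n:ℝ) := by exact_mod_cast hk
            linarith
          have hjr : ((2*n + k₀ - k:ℕ):ℝ) = 2*(n:ℝ) + k₀ - k := by
            rw [Nat.cast_sub (by omega)]
            push_cast; ring
          have hb : |Gker n (θ - (k:ℝ)*Real.pi/(n:ℝ))| ≤ (n:ℝ)/2 * (1/((2*n + k₀ - k:ℕ):ℝ)) := by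
            apply far k (2*n + k₀ - k) (by omega)
            · rw [habs_neg k (by linarith), hjr]
              exact hmono _ _ (by linarith)
            · rw [habs_neg k (by linarith), hjr]
              have h3 : ((k:ℝ) - s) * Real.pi/n + (2*(n:ℝ) + k₀ - k) * Real.pi/n ≤ 2*Real.pi := by
                rw [show ((k:ℝ) - s) * Real.pi/n + (2*(n:ℝ) + k₀ - k) * Real.pi/n
                    = (((k:ℝ)-s) + (2*(n:ℝ)+k₀-k)) * Real.pi/n by ring]
                apply h2pi
                linarith
              linarith
          have e1 : B1 k = 0 := by simp only [hB1]; rw [if_neg (by omega)]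
          have e2 : B2 k = 0 := by simp only [hB2]; rw [if_neg (by omega)]
          have e3 : B3 k = 0 := by simp only [hB3]; rw [if_neg (by omega)]
          have e4 : B4 k = (n:ℝ)/2 * (1/((2*n + k₀ - k:ℕ):ℝ)) := by
            simp only [hB4]; rw [if_pos (show k₀+n+1 ≤ k by omega)]
          rw [e1, e2, e3, e4]; linarith
  -- now sum the bounds
  have hsum := Finset.sum_le_sum key
  have hS1 : ∑ k ∈ Finset.range (2*n), B1 k ≤ (n:ℝ)/2 * (1 + Real.log (2*n)) := by
    have e : ∑ k ∈ Finset.range (2*n), B1 k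
        = (n:ℝ)/2 * ∑ k ∈ (Finset.range (2*n)).filter (fun k => k < k₀), (1:ℝ)/((k₀ - k:ℕ):ℝ) := by
      rw [Finset.mul_sum, Finset.sum_filter]
    rw [e]
    apply mul_le_mul_of_nonneg_left _ (by positivity)
    apply recip_sum_le n (by omega)
    · intro a ha b hb hab
      simp only [Finset.coe_filter, Set.mem_setOf_eq, Finset.mem_range] at ha hb
      have hab' : k₀ - a = k₀ - b := hab
      omega
    · intro k hk
      simp only [Finset.mem_filter, Finset.mem_range] at hk
      rw [Finset.mem_Icc]
      omega
  have hS3 : ∑ k ∈ Finset.range (2*n), B3 k ≤ (n:ℝ)/2 * (1 + Real.log (2*n)) := by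
    have e : ∑ k ∈ Finset.range (2*n), B3 k
        = (n:ℝ)/2 * ∑ k ∈ (Finset.range (2*n)).filter (fun k => k₀+2 ≤ k ∧ k ≤ k₀ + n),
            (1:ℝ)/((k - k₀ - 1:ℕ):ℝ) := by
      rw [Finset.mul_sum, Finset.sum_filter]
    rw [e]
    apply mul_le_mul_of_nonneg_left _ (by positivity)
    apply recip_sum_le n (by omega)
    · intro a ha b hb hab
      simp only [Finset.coe_filter, Set.mem_setOf_eq, Finset.mem_range] at ha hb
      have hab' : a - k₀ - 1 = b - k₀ - 1 := hab
      omega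
    · intro k hk
      simp only [Finset.mem_filter, Finset.mem_range] at hk
      rw [Finset.mem_Icc]
      omega
  have hS4 : ∑ k ∈ Finset.range (2*n), B4 k ≤ (n:ℝ)/2 * (1 + Real.log (2*n)) := by
    have e : ∑ k ∈ Finset.range (2*n), B4 k
        = (n:ℝ)/2 * ∑ k ∈ (Finset.range (2*n)).filter (fun k => k₀+n+1 ≤ k),
            (1:ℝ)/((2*n + k₀ - k:ℕ):ℝ) := by
      rw [Finset.mul_sum, Finset.sum_filter]
    rw [e]
    apply mul_le_mul_of_nonneg_left _ (by positivity)
    apply recip_sum_le n (by omega)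
    · intro a ha b hb hab
      simp only [Finset.coe_filter, Set.mem_setOf_eq, Finset.mem_range] at ha hb
      have hab' : 2*n + k₀ - a = 2*n + k₀ - b := hab
      omega
    · intro k hk
      simp only [Finset.mem_filter, Finset.mem_range] at hk
      rw [Finset.mem_Icc]
      omega
  have hS2 : ∑ k ∈ Finset.range (2*n), B2 k ≤ 2*((n:ℝ)+2) := by
    have hpt : ∀ k ∈ Finset.range (2*n), B2 k ≤
        (if k = k₀ then (n:ℝ)+2 else 0) + (if k = k₀+1 then (n:ℝ)+2 else 0) := by
      intro k _
      simp only [hB2]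
      split_ifs <;> first | linarith | omega
    calc ∑ k ∈ Finset.range (2*n), B2 k
        ≤ ∑ k ∈ Finset.range (2*n),
            ((if k = k₀ then (n:ℝ)+2 else 0) + (if k = k₀+1 then (n:ℝ)+2 else 0)) :=
          Finset.sum_le_sum hpt
      _ = (∑ k ∈ Finset.range (2*n), if k = k₀ then (n:ℝ)+2 else 0)
          + (∑ k ∈ Finset.range (2*n), if k = k₀+1 then (n:ℝ)+2 else 0) :=
          Finset.sum_add_distrib
      _ ≤ 2*((n:ℝ)+2) := by
          rw [Finset.sum_ite_eq' (Finset.range (2*n)) k₀ (fun _ => (n:ℝ)+2),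
            Finset.sum_ite_eq' (Finset.range (2*n)) (k₀+1) (fun _ => (n:ℝ)+2)]
          split_ifs <;> linarith
  calc ∑ k ∈ Finset.range (2*n), |Gker n (θ - (k:ℝ)*Real.pi/(n:ℝ))|
      ≤ ∑ k ∈ Finset.range (2*n), (B1 k + B2 k + B3 k + B4 k) := hsum
    _ = (∑ k ∈ Finset.range (2*n), B1 k) + (∑ k ∈ Finset.range (2*n), B2 k)
        + (∑ k ∈ Finset.range (2*n), B3 k) + (∑ k ∈ Finset.range (2*n), B4 k) := by
        rw [← Finset.sum_add_distrib, ← Finset.sum_add_distrib, ← Finset.sum_add_distrib]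
    _ ≤ 2*((n:ℝ)+2) + 3 * ((n:ℝ)/2) * (1 + Real.log (2*n)) := by linarith

/-- The Chebyshev–Lobatto points `C_n = {cos(kπ/n) : k = 0,…,n}` form a one-dimensional
weakly admissible mesh for `[-1,1]` with constant `C(A_n) = O(log n)`:
there is `c > 0` such that for all `n ≥ 2` and every real polynomial `p` of degree at most `n`,
`‖p‖_{[-1,1]} ≤ c · log n · max_{0 ≤ k ≤ n} |p(cos(kπ/n))|`. -/
theorem chebyshev_lobatto_WAM :
    ∃ c : ℝ, 0 < c ∧
      ∀ n : ℕ, 2 ≤ n →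
        ∀ p : Polynomial ℝ, p.natDegree ≤ n →
          ∀ M : ℝ, (∀ k : ℕ, k ≤ n → |p.eval (Real.cos (k * Real.pi / n))| ≤ M) →
            ∀ x ∈ Set.Icc (-1 : ℝ) 1, |p.eval x| ≤ c * Real.log n * M := by
  refine ⟨16, by norm_num, ?_⟩
  intro n hn p hp M hM x hx
  obtain ⟨hx1, hx2⟩ := hx
  have hn0 : (0:ℝ) < n := by positivity
  have hn2 : (2:ℝ) ≤ (n:ℝ) := by exact_mod_cast hn
  have hpi := Real.pi_pos
  have hM0 : 0 ≤ M := le_trans (abs_nonneg _) (hM 0 (by omega))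
  -- node bound for all k < 2n
  have hnode : ∀ k ∈ Finset.range (2*n), |p.eval (Real.cos ((k:ℝ)*Real.pi/(n:ℝ)))| ≤ M := by
    intro k hk
    rw [Finset.mem_range] at hk
    rcases le_or_gt k n with hkn | hkn
    · exact hM k hkn
    · have h1 : ((2*n - k:ℕ):ℝ) = 2*(n:ℝ) - k := by
        rw [Nat.cast_sub (by omega)]; push_cast; ring
      have harg : (k:ℝ)*Real.pi/(n:ℝ) = 2*Real.pi - ((2*n - k:ℕ):ℝ)*Real.pi/(n:ℝ) := by
        rw [h1]; field_simp; ring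
      have hcos : Real.cos ((k:ℝ)*Real.pi/(n:ℝ)) = Real.cos (((2*n - k:ℕ):ℝ)*Real.pi/(n:ℝ)) := by
        rw [harg, Real.cos_sub, Real.cos_two_pi, Real.sin_two_pi]
        ring
      rw [hcos]
      exact hM (2*n - k) (by omega)
  set θ : ℝ := Real.arccos x with hθ
  have hθ0 : 0 ≤ θ := Real.arccos_nonneg x
  have hθπ : θ ≤ Real.pi := Real.arccos_le_pi x
  have hcosθ : Real.cos θ = x := Real.cos_arccos hx1 hx2
  have hint := interp n (by omega) p hp θ
  have habs : (n:ℝ) * |p.eval x| ≤ M * (2*((n:ℝ)+2) + 3 * ((n:ℝ)/2) * (1 + Real.log (2*n))) := by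
    have h1 : (n:ℝ) * |p.eval x| = |(n:ℝ) * p.eval (Real.cos θ)| := by
      rw [hcosθ, abs_mul, abs_of_pos hn0]
    rw [h1, hint]
    calc |∑ k ∈ Finset.range (2*n), p.eval (Real.cos ((k:ℝ)*Real.pi/n)) * Gker n (θ - (k:ℝ)*Real.pi/(n:ℝ))|
        ≤ ∑ k ∈ Finset.range (2*n), |p.eval (Real.cos ((k:ℝ)*Real.pi/n)) * Gker n (θ - (k:ℝ)*Real.pi/(n:ℝ))| :=
          Finset.abs_sum_le_sum_abs _ _
      _ ≤ ∑ k ∈ Finset.range (2*n), M * |Gker n (θ - (k:ℝ)*Real.pi/(n:ℝ))| := by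
          apply Finset.sum_le_sum
          intro k hk
          rw [abs_mul]
          exact mul_le_mul_of_nonneg_right (hnode k hk) (abs_nonneg _)
      _ = M * ∑ k ∈ Finset.range (2*n), |Gker n (θ - (k:ℝ)*Real.pi/(n:ℝ))| := by
          rw [Finset.mul_sum]
      _ ≤ M * (2*((n:ℝ)+2) + 3 * ((n:ℝ)/2) * (1 + Real.log (2*n))) := by
          apply mul_le_mul_of_nonneg_left (sum_abs_Gker_le n hn θ hθ0 hθπ) hM0
  -- final numeric step
  have hlog2lo : (0.6931471803:ℝ) < Real.log 2 := Real.log_two_gt_d9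
  have hlog2hi : Real.log 2 < 0.6931471808 := Real.log_two_lt_d9
  have hlogn : Real.log 2 ≤ Real.log n := Real.log_le_log (by norm_num) hn2
  have hlog2n : Real.log (2*(n:ℝ)) = Real.log 2 + Real.log n :=
    Real.log_mul (by norm_num) (by positivity)
  have hT : 2*((n:ℝ)+2) + 3 * ((n:ℝ)/2) * (1 + Real.log (2*n)) ≤ 16 * Real.log n * (n:ℝ) := by
    push_cast
    rw [hlog2n]
    have h4 : (4:ℝ) ≤ 2*(n:ℝ) := by linarith
    nlinarith [mul_le_mul_of_nonneg_left hlogn hn0.le,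
      mul_le_mul_of_nonneg_left hlog2lo.le hn0.le,
      mul_le_mul_of_nonneg_left hlog2hi.le hn0.le,
      mul_le_mul_of_nonneg_left (le_trans hlog2lo.le hlogn) hn0.le]
  have := le_trans habs (mul_le_mul_of_nonneg_left hT hM0)
  have hgoal : (n:ℝ) * |p.eval x| ≤ (n:ℝ) * (16 * Real.log n * M) := by
    calc (n:ℝ) * |p.eval x| ≤ M * (16 * Real.log n * (n:ℝ)) := this
      _ = (n:ℝ) * (16 * Real.log n * M) := by ring
  exact le_of_mul_le_mul_left hgoal hn0
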